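/- Stable isomorphism is an equivalence relation on pairs (M, W) where W is an F-vector space and M is a module over P_W = Sym(W). In particular, it is transitive: if (M, W) is stably isomorphic to (M', W') and (M', W') is stably isomorphic to (M'', W''), then (M, W) is stably isomorphic to (M'', W''). -/

import Mathlib

/-! Symmetric algebras and stable isomorphism of modules over them. -/

/-- The relation on the tensor algebra whose `RingQuot` is the symmetric algebra. -/
inductive SymRel (R : Type*) [CommRing R] (M : Type*) [AddCommGroup M] [Module R M] :
    TensorAlgebra R M → TensorAlgebra R M → Prop
  | mul_comm (x y : TensorAlgebra R M) : SymRel R M (x * y) (y * x)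

/-- The symmetric algebra of a module: the tensor algebra modulo commutativity. -/
def SymmAlgebra (R : Type*) [CommRing R] (M : Type*) [AddCommGroup M] [Module R M] : Type _ :=
  RingQuot (SymRel R M)

private lemma SymmAlgebra.mul_comm' {R : Type*} [CommRing R] {M : Type*}
    [AddCommGroup M] [Module R M] (a b : RingQuot (SymRel R M)) : a * b = b * a := by
  obtain ⟨x, rfl⟩ := RingQuot.mkRingHom_surjective _ a
  obtain ⟨y, rfl⟩ := RingQuot.mkRingHom_surjective _ b
  rw [← map_mul, ← map_mul]
  exact RingQuot.mkRingHom_rel (SymRel.mul_comm x y)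

noncomputable instance SymmAlgebra.instCommRing (R : Type*) [CommRing R] (M : Type*)
    [AddCommGroup M] [Module R M] : CommRing (SymmAlgebra R M) :=
  { (inferInstance : Ring (RingQuot (SymRel R M))) with
    mul_comm := SymmAlgebra.mul_comm' }

noncomputable instance SymmAlgebra.instAlgebra (R : Type*) [CommRing R] (M : Type*)
    [AddCommGroup M] [Module R M] : Algebra R (SymmAlgebra R M) :=
  inferInstanceAs (Algebra R (RingQuot (SymRel R M)))

/-- Functoriality of the symmetric algebra: the algebra map `Sym(f)` induced by a linear
map `f : M →ₗ[R] N`. -/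
noncomputable def SymmAlgebra.map (R : Type*) [CommRing R] {M N : Type*}
    [AddCommGroup M] [Module R M] [AddCommGroup N] [Module R N] (f : M →ₗ[R] N) :
    SymmAlgebra R M →ₐ[R] SymmAlgebra R N :=
  RingQuot.liftAlgHom R
    ⟨((RingQuot.mkAlgHom R (SymRel R N)).comp
        (TensorAlgebra.lift R ((TensorAlgebra.ι R).comp f))),
      by
        intro x y h
        cases h with
        | mul_comm a b =>
          show (RingQuot.mkAlgHom R (SymRel R N))
              ((TensorAlgebra.lift R ((TensorAlgebra.ι R).comp f)) (a * b)) =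
            (RingQuot.mkAlgHom R (SymRel R N))
              ((TensorAlgebra.lift R ((TensorAlgebra.ι R).comp f)) (b * a))
          rw [map_mul, map_mul, map_mul, map_mul]
          exact SymmAlgebra.mul_comm' _ _⟩

/-- `(M, W)` is stably isomorphic to `(M', W')`: there is an `F`-vector space `V` and
injections `i : W ↪ V`, `i' : W' ↪ V` inducing an isomorphism
`M ⊗_{Sym(W)} Sym(V) ≅ M' ⊗_{Sym(W')} Sym(V)` of `Sym(V)`-modules. -/
def StablyIso (F : Type) [Field F]
    (W : Type) [AddCommGroup W] [Module F W]
    (W' : Type) [AddCommGroup W'] [Module F W']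
    (M : Type) [AddCommGroup M] [Module (SymmAlgebra F W) M]
    (M' : Type) [AddCommGroup M'] [Module (SymmAlgebra F W') M'] : Prop :=
  ∃ (V : Type) (ag : AddCommGroup V),
    letI := ag
    ∃ mo : Module F V,
      letI := mo
      ∃ (i : W →ₗ[F] V) (i' : W' →ₗ[F] V),
        Function.Injective i ∧ Function.Injective i' ∧
          (letI : Algebra (SymmAlgebra F W) (SymmAlgebra F V) :=
            ((SymmAlgebra.map F i).toRingHom).toAlgebra
           letI : Algebra (SymmAlgebra F W') (SymmAlgebra F V) :=
            ((SymmAlgebra.map F i').toRingHom).toAlgebra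
           Nonempty ((TensorProduct (SymmAlgebra F W) (SymmAlgebra F V) M)
              ≃ₗ[SymmAlgebra F V]
             (TensorProduct (SymmAlgebra F W') (SymmAlgebra F V) M')))

/-- The canonical linear map into the symmetric algebra. -/
noncomputable def SymmAlgebra.ι (R : Type*) [CommRing R] {M : Type*}
    [AddCommGroup M] [Module R M] : M →ₗ[R] SymmAlgebra R M :=
  (RingQuot.mkAlgHom R (SymRel R M)).toLinearMap.comp (TensorAlgebra.ι R)

theorem SymmAlgebra.hom_ext {R : Type*} [CommRing R] {M : Type*}
    [AddCommGroup M] [Module R M] {S : Type*} [Semiring S] [Algebra R S]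
    {f g : SymmAlgebra R M →ₐ[R] S}
    (h : f.toLinearMap.comp (SymmAlgebra.ι R) = g.toLinearMap.comp (SymmAlgebra.ι R)) :
    f = g := by
  apply RingQuot.ringQuot_ext'
  apply TensorAlgebra.hom_ext
  ext x
  exact LinearMap.congr_fun h x

@[simp]
theorem SymmAlgebra.map_ι_apply (R : Type*) [CommRing R] {M N : Type*}
    [AddCommGroup M] [Module R M] [AddCommGroup N] [Module R N] (f : M →ₗ[R] N) (x : M) :
    SymmAlgebra.map R f (SymmAlgebra.ι R x) = SymmAlgebra.ι R (f x) := by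
  show RingQuot.liftAlgHom R _ (RingQuot.mkAlgHom R (SymRel R M) (TensorAlgebra.ι R x)) = _
  erw [RingQuot.liftAlgHom_mkAlgHom_apply]
  show RingQuot.mkAlgHom R (SymRel R N) (TensorAlgebra.lift R ((TensorAlgebra.ι R).comp f) (TensorAlgebra.ι R x)) = _
  rw [TensorAlgebra.lift_ι_apply]
  rfl

theorem SymmAlgebra.map_comp (R : Type*) [CommRing R] {M N P : Type*}
    [AddCommGroup M] [Module R M] [AddCommGroup N] [Module R N]
    [AddCommGroup P] [Module R P] (g : N →ₗ[R] P) (f : M →ₗ[R] N) :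
    SymmAlgebra.map R (g.comp f) = (SymmAlgebra.map R g).comp (SymmAlgebra.map R f) := by
  apply SymmAlgebra.hom_ext
  ext x
  simp

/-- Auxiliary lemma for reflexivity. -/
theorem refl_aux (R B M : Type) [CommRing R] [CommRing B] [Algebra R B]
    [AddCommGroup M] [Module R M] :
    Nonempty (TensorProduct R B M ≃ₗ[B] TensorProduct R B M) :=
  ⟨LinearEquiv.refl _ _⟩

/-- Auxiliary gluing lemma for transitivity. -/
theorem glue_aux (R R' R'' A A' B : Type)
    [CommRing R] [CommRing R'] [CommRing R''] [CommRing A] [CommRing A'] [CommRing B]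
    [Algebra R A] [Algebra R' A] [Algebra R' A'] [Algebra R'' A']
    [Algebra A B] [Algebra A' B] [Algebra R B] [Algebra R' B] [Algebra R'' B]
    [IsScalarTower R A B] [IsScalarTower R' A B] [IsScalarTower R' A' B]
    [IsScalarTower R'' A' B]
    (M M' M'' : Type) [AddCommGroup M] [AddCommGroup M'] [AddCommGroup M'']
    [Module R M] [Module R' M'] [Module R'' M'']
    (e₁ : TensorProduct R A M ≃ₗ[A] TensorProduct R' A M')
    (e₂ : TensorProduct R' A' M' ≃ₗ[A'] TensorProduct R'' A' M'') :
    Nonempty (TensorProduct R B M ≃ₗ[B] TensorProduct R'' B M'') := by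
  have h1 : TensorProduct R B M ≃ₗ[B] TensorProduct A B (TensorProduct R A M) :=
    (TensorProduct.AlgebraTensorModule.cancelBaseChange R A B B M).symm
  have h2 : TensorProduct A B (TensorProduct R A M) ≃ₗ[B]
      TensorProduct A B (TensorProduct R' A M') :=
    TensorProduct.AlgebraTensorModule.congr (LinearEquiv.refl B B) e₁
  have h3 : TensorProduct A B (TensorProduct R' A M') ≃ₗ[B] TensorProduct R' B M' :=
    TensorProduct.AlgebraTensorModule.cancelBaseChange R' A B B M'
  have h4 : TensorProduct R' B M' ≃ₗ[B] TensorProduct A' B (TensorProduct R' A' M') :=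
    (TensorProduct.AlgebraTensorModule.cancelBaseChange R' A' B B M').symm
  have h5 : TensorProduct A' B (TensorProduct R' A' M') ≃ₗ[B]
      TensorProduct A' B (TensorProduct R'' A' M'') :=
    TensorProduct.AlgebraTensorModule.congr (LinearEquiv.refl B B) e₂
  have h6 : TensorProduct A' B (TensorProduct R'' A' M'') ≃ₗ[B] TensorProduct R'' B M'' :=
    TensorProduct.AlgebraTensorModule.cancelBaseChange R'' A' B B M''
  exact ⟨h1 ≪≫ₗ h2 ≪≫ₗ h3 ≪≫ₗ h4 ≪≫ₗ h5 ≪≫ₗ h6⟩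

/-- Stable isomorphism is an equivalence relation on pairs `(M, W)`: it is reflexive,
symmetric and, in particular, transitive. -/
theorem stmt_5 (F : Type) [Field F] :
    (∀ (W : Type) (_ : AddCommGroup W), ∀ (_ : Module F W)
      (M : Type) (_ : AddCommGroup M), ∀ (_ : Module (SymmAlgebra F W) M),
        StablyIso F W W M M) ∧
    (∀ (W W' : Type) (_ : AddCommGroup W) (_ : AddCommGroup W'),
      ∀ (_ : Module F W) (_ : Module F W')
      (M M' : Type) (_ : AddCommGroup M) (_ : AddCommGroup M'),
      ∀ (_ : Module (SymmAlgebra F W) M) (_ : Module (SymmAlgebra F W') M'),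
        StablyIso F W W' M M' → StablyIso F W' W M' M) ∧
    (∀ (W W' W'' : Type) (_ : AddCommGroup W) (_ : AddCommGroup W') (_ : AddCommGroup W''),
      ∀ (_ : Module F W) (_ : Module F W') (_ : Module F W'')
      (M M' M'' : Type) (_ : AddCommGroup M) (_ : AddCommGroup M') (_ : AddCommGroup M''),
      ∀ (_ : Module (SymmAlgebra F W) M) (_ : Module (SymmAlgebra F W') M')
        (_ : Module (SymmAlgebra F W'') M''),
        StablyIso F W W' M M' → StablyIso F W' W'' M' M'' →
          StablyIso F W W'' M M'') := by
  refine ⟨?_, ?_, ?_⟩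
  · -- reflexivity
    intro W _ _ M _ _
    letI : Algebra (SymmAlgebra F W) (SymmAlgebra F W) :=
      ((SymmAlgebra.map F (LinearMap.id : W →ₗ[F] W)).toRingHom).toAlgebra
    exact ⟨W, inferInstance, inferInstance, LinearMap.id, LinearMap.id,
      fun _ _ h => h, fun _ _ h => h,
      refl_aux (SymmAlgebra F W) (SymmAlgebra F W) M⟩
  · -- symmetry
    rintro W W' _ _ _ _ M M' _ _ _ _ ⟨V, agV, moV, i, i', hi, hi', ⟨e⟩⟩
    exact ⟨V, agV, moV, i', i, hi', hi, ⟨e.symm⟩⟩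
  · -- transitivity
    rintro W W' W'' _ _ _ _ _ _ M M' M'' _ _ _ _ _ _
      ⟨V₁, agV₁, moV₁, j₁, j₁', hj₁, hj₁', ⟨e₁⟩⟩
      ⟨V₂, agV₂, moV₂, j₂', j₂'', hj₂', hj₂'', ⟨e₂⟩⟩
    letI := agV₁; letI := moV₁; letI := agV₂; letI := moV₂
    -- pushout of V₁ ← W' → V₂
    set K : Submodule F (V₁ × V₂) := LinearMap.range (j₁'.prod (-j₂')) with hK
    let V : Type := (V₁ × V₂) ⧸ K
    let k₁ : V₁ →ₗ[F] V := K.mkQ.comp (LinearMap.inl F V₁ V₂)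
    let k₂ : V₂ →ₗ[F] V := K.mkQ.comp (LinearMap.inr F V₁ V₂)
    have hk₁ : Function.Injective k₁ := by
      rw [← LinearMap.ker_eq_bot]
      rw [Submodule.eq_bot_iff]
      intro v hv
      simp only [LinearMap.mem_ker, k₁, LinearMap.comp_apply, LinearMap.inl_apply] at hv
      rw [Submodule.mkQ_apply, Submodule.Quotient.mk_eq_zero] at hv
      obtain ⟨w, hw⟩ := hv
      simp only [LinearMap.prod_apply, Function.prod, Prod.mk.injEq, LinearMap.neg_apply] at hw
      have : w = 0 := hj₂' ((neg_eq_zero.mp hw.2).trans (map_zero _).symm)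
      rw [this] at hw
      simpa using hw.1.symm
    have hk₂ : Function.Injective k₂ := by
      rw [← LinearMap.ker_eq_bot]
      rw [Submodule.eq_bot_iff]
      intro v hv
      simp only [LinearMap.mem_ker, k₂, LinearMap.comp_apply, LinearMap.inr_apply] at hv
      rw [Submodule.mkQ_apply, Submodule.Quotient.mk_eq_zero] at hv
      obtain ⟨w, hw⟩ := hv
      simp only [LinearMap.prod_apply, Function.prod, Prod.mk.injEq, LinearMap.neg_apply] at hw
      have : w = 0 := hj₁' (hw.1.trans (map_zero _).symm)
      rw [this] at hw
      simpa using hw.2.symm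
    have hcomm : k₁.comp j₁' = k₂.comp j₂' := by
      ext w
      simp only [LinearMap.comp_apply, k₁, k₂, LinearMap.inl_apply, LinearMap.inr_apply,
        Submodule.mkQ_apply]
      rw [Submodule.Quotient.eq]
      exact ⟨w, by simp [Prod.ext_iff, Prod.sub_def]⟩
    letI iRA1 : Algebra (SymmAlgebra F W) (SymmAlgebra F V₁) := ((SymmAlgebra.map F j₁).toRingHom).toAlgebra
    letI iR1A1 : Algebra (SymmAlgebra F W') (SymmAlgebra F V₁) := ((SymmAlgebra.map F j₁').toRingHom).toAlgebra
    letI iR1A2 : Algebra (SymmAlgebra F W') (SymmAlgebra F V₂) := ((SymmAlgebra.map F j₂').toRingHom).toAlgebra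
    letI iR2A2 : Algebra (SymmAlgebra F W'') (SymmAlgebra F V₂) := ((SymmAlgebra.map F j₂'').toRingHom).toAlgebra
    letI iA1B : Algebra (SymmAlgebra F V₁) (SymmAlgebra F V) := ((SymmAlgebra.map F k₁).toRingHom).toAlgebra
    letI iA2B : Algebra (SymmAlgebra F V₂) (SymmAlgebra F V) := ((SymmAlgebra.map F k₂).toRingHom).toAlgebra
    letI iRB : Algebra (SymmAlgebra F W) (SymmAlgebra F V) := ((SymmAlgebra.map F (k₁.comp j₁)).toRingHom).toAlgebra
    letI iR1B : Algebra (SymmAlgebra F W') (SymmAlgebra F V) := ((SymmAlgebra.map F (k₁.comp j₁')).toRingHom).toAlgebra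
    letI iR2B : Algebra (SymmAlgebra F W'') (SymmAlgebra F V) := ((SymmAlgebra.map F (k₂.comp j₂'')).toRingHom).toAlgebra
    haveI t1 : IsScalarTower (SymmAlgebra F W) (SymmAlgebra F V₁) (SymmAlgebra F V) := IsScalarTower.of_algebraMap_eq' (by
      show (SymmAlgebra.map F (k₁.comp j₁)).toRingHom = _
      rw [SymmAlgebra.map_comp]; rfl)
    haveI t2 : IsScalarTower (SymmAlgebra F W') (SymmAlgebra F V₁) (SymmAlgebra F V) := IsScalarTower.of_algebraMap_eq' (by
      show (SymmAlgebra.map F (k₁.comp j₁')).toRingHom = _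
      rw [SymmAlgebra.map_comp]; rfl)
    haveI t3 : IsScalarTower (SymmAlgebra F W') (SymmAlgebra F V₂) (SymmAlgebra F V) := IsScalarTower.of_algebraMap_eq' (by
      show (SymmAlgebra.map F (k₁.comp j₁')).toRingHom = _
      rw [hcomm, SymmAlgebra.map_comp]; rfl)
    haveI t4 : IsScalarTower (SymmAlgebra F W'') (SymmAlgebra F V₂) (SymmAlgebra F V) := IsScalarTower.of_algebraMap_eq' (by
      show (SymmAlgebra.map F (k₂.comp j₂'')).toRingHom = _
      rw [SymmAlgebra.map_comp]; rfl)
    refine ⟨V, inferInstance, inferInstance, k₁.comp j₁, k₂.comp j₂'',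
      hk₁.comp hj₁, hk₂.comp hj₂'', ?_⟩
    exact glue_aux (SymmAlgebra F W) (SymmAlgebra F W') (SymmAlgebra F W'')
      (SymmAlgebra F V₁) (SymmAlgebra F V₂) (SymmAlgebra F V) M M' M'' e₁ e₂
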